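/- For every integer n ≥ 1, the product over all pairs 0 ≤ i < j ≤ n of f_{2n}(j−i)·f_{2n}(i+j) equals 4·(2n)^{n+1}, where f_k(r) = 4·sin²(rπ/k). -/

import Mathlib

/-- The function `f_k(r) = 4 sin²(rπ/k)`. -/
noncomputable def f (k : ℕ) (r : ℝ) : ℝ := 4 * Real.sin (r * Real.pi / k) ^ 2

open Finset
lemma normSq_one_sub_exp (θ : ℝ) :
    Complex.normSq (1 - Complex.exp (θ * Complex.I)) = 4 * Real.sin (θ/2) ^ 2 := by
  rw [Complex.exp_mul_I]
  have h2 : Real.sin (θ/2) ^ 2 = 1/2 - Real.cos (2*(θ/2)) / 2 := Real.sin_sq_eq_half_sub _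
  have h1 := Real.sin_sq_add_cos_sq θ
  rw [show 2*(θ/2) = θ by ring] at h2
  simp [Complex.normSq_apply, Complex.cos_ofReal_re, Complex.sin_ofReal_re,
    Complex.cos_ofReal_im, Complex.sin_ofReal_im]
  nlinarith

lemma key_prod (m : ℕ) :
    ∏ r ∈ range m, (4 * Real.sin ((r+1) * Real.pi / (m+1)) ^ 2) = ((m:ℝ)+1)^2 := by
  have hμ := Complex.isPrimitiveRoot_exp (m+1) (Nat.succ_ne_zero m)
  have h := hμ.prod_one_sub_pow_eq_order
  have h2 := congrArg Complex.normSq h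
  rw [map_prod] at h2
  have hterm : ∀ r : ℕ,
      Complex.normSq (1 - Complex.exp (2 * (Real.pi:ℂ) * Complex.I / ((m+1 : ℕ):ℂ)) ^ (r+1))
      = 4 * Real.sin ((r+1) * Real.pi / (m+1)) ^ 2 := by
    intro r
    have he : Complex.exp (2 * (Real.pi:ℂ) * Complex.I / ((m+1 : ℕ):ℂ)) ^ (r+1)
        = Complex.exp ((2 * (r+1) * Real.pi / (m+1) : ℝ) * Complex.I) := by
      rw [← Complex.exp_nat_mul]
      have hne : ((m:ℂ)+1) ≠ 0 := Nat.cast_add_one_ne_zero m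
      push_cast
      congr 1
      field_simp
    rw [he, normSq_one_sub_exp]
    congr 2
    ring
  rw [Finset.prod_congr rfl (fun r _ => hterm r)] at h2
  have h3 : Complex.normSq ((m : ℂ) + 1) = ((m:ℝ)+1)^2 := by
    rw [show ((m : ℂ) + 1) = (((m:ℝ)+1 : ℝ) : ℂ) by push_cast; ring, Complex.normSq_ofReal]
    ring
  rw [h3] at h2
  exact h2

section aux
variable (n : ℕ)

noncomputable def Faux (r : ℕ) : ℝ := 4 * Real.sin (r * Real.pi / (2*n)) ^ 2

noncomputable def Paux (m : ℕ) : ℝ := ∏ r ∈ range m, Faux n (r+1)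

variable {n}

lemma Faux_symm (hn : 1 ≤ n) {a : ℕ} (ha : a ≤ 2*n) : Faux n (2*n - a) = Faux n a := by
  unfold Faux
  have hcast : ((2*n - a : ℕ) : ℝ) = 2*n - a := by
    push_cast [Nat.cast_sub ha]; ring
  have hne : (2*(n:ℝ)) ≠ 0 := by positivity
  rw [hcast, show (2*(n:ℝ) - a) * Real.pi / (2*n) = Real.pi - a * Real.pi / (2*n) by
    field_simp, Real.sin_pi_sub]

lemma Faux_pos {r : ℕ} (h1 : 1 ≤ r) (h2 : r < 2*n) : 0 < Faux n r := by
  unfold Faux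
  have hπ := Real.pi_pos
  have hn : (0:ℝ) < 2*n := by
    have : 0 < 2*n := lt_of_le_of_lt (Nat.zero_le r) h2
    exact_mod_cast this
  have hs : 0 < Real.sin (r * Real.pi / (2*n)) := by
    apply Real.sin_pos_of_pos_of_lt_pi
    · have : (0:ℝ) < r := by exact_mod_cast h1
      positivity
    · rw [div_lt_iff₀ hn]
      have : (r:ℝ) < 2*n := by exact_mod_cast h2
      nlinarith
  positivity

lemma Paux_pos {m : ℕ} (hm : ∀ r < m, r + 1 < 2*n) : 0 < Paux n m := by
  apply Finset.prod_pos
  intro r hr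
  exact Faux_pos (Nat.le_add_left 1 r) (hm r (mem_range.mp hr))

lemma Paux_top (hn : 1 ≤ n) : Paux n (2*n - 1) = (2*(n:ℝ))^2 := by
  have h := key_prod (2*n - 1)
  have hc : ((2*n - 1 : ℕ) : ℝ) + 1 = 2*n := by
    have : 1 ≤ 2*n := by omega
    push_cast [Nat.cast_sub this]; ring
  rw [hc] at h
  rw [← h]
  apply Finset.prod_congr rfl
  intro r _
  unfold Faux
  push_cast
  ring_nf

lemma Paux_cut (hn : 1 ≤ n) {m : ℕ} (hm : m ≤ 2*n - 1) :
    Paux n (2*n - 1) = Paux n m * Paux n (2*n - 1 - m) := by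
  have h1 := Finset.prod_range_mul_prod_Ico (fun r => Faux n (r+1)) hm
  have h2 : ∏ r ∈ Ico m (2*n-1), Faux n (r+1) = Paux n (2*n - 1 - m) := by
    rw [Finset.prod_Ico_eq_prod_range]
    set L := 2*n - 1 - m with hL
    unfold Paux
    rw [← Finset.prod_range_reflect (fun t => Faux n (t+1)) L]
    apply Finset.prod_congr rfl
    intro t ht
    have htL : t < L := mem_range.mp ht
    show Faux n (m + t + 1) = Faux n (L - 1 - t + 1)
    rw [show L - 1 - t + 1 = 2*n - (m + t + 1) by omega]
    exact (Faux_symm (a := m + t + 1) hn (by omega)).symm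
  unfold Paux
  rw [← h1, h2]
  rfl

lemma prod_range_even_odd (g : ℕ → ℝ) (m : ℕ) :
    ∏ r ∈ range (2*m), g r = (∏ t ∈ range m, g (2*t)) * ∏ t ∈ range m, g (2*t+1) := by
  induction m with
  | zero => simp
  | succ k ih =>
    rw [show 2*(k+1) = 2*k+1+1 by ring, prod_range_succ, prod_range_succ, ih,
      prod_range_succ, prod_range_succ]
    ring

end aux
section derived
open Finset
variable {n : ℕ}

lemma Faux_self (hn : 1 ≤ n) : Faux n n = 4 := by
  unfold Faux
  have hne : (n:ℝ) ≠ 0 := by positivity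
  rw [show (n:ℝ) * Real.pi / (2*n) = Real.pi/2 by field_simp, Real.sin_pi_div_two]
  norm_num

lemma Paux_even_prod (hn : 1 ≤ n) : ∏ t ∈ range (n-1), Faux n (2*t+2) = (n:ℝ)^2 := by
  have h := key_prod (n-1)
  have hc : ((n-1 : ℕ) : ℝ) + 1 = n := by
    push_cast [Nat.cast_sub hn]; ring
  rw [hc] at h
  rw [← h]
  apply Finset.prod_congr rfl
  intro t _
  unfold Faux
  have hne : (n:ℝ) ≠ 0 := by
    have : (0:ℝ) < n := by exact_mod_cast hn
    positivity
  have harg : ((2*t+2 : ℕ):ℝ) * Real.pi / (2*(n:ℝ)) = ((t:ℝ)+1) * Real.pi / n := by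
    push_cast
    field_simp
  rw [harg]

lemma Paux_odd_prod (hn : 1 ≤ n) : ∏ t ∈ range n, Faux n (2*t+1) = 4 := by
  have hsplit : Paux n (2*n-1)
      = (∏ t ∈ range n, Faux n (2*t+1)) * ∏ t ∈ range (n-1), Faux n (2*t+2) := by
    unfold Paux
    rw [show 2*n-1 = 2*(n-1)+1 by omega, prod_range_succ,
      prod_range_even_odd (fun r => Faux n (r+1)) (n-1)]
    have h1 : ∏ t ∈ range n, Faux n (2*t+1)
        = (∏ t ∈ range (n-1), Faux n (2*t+1)) * Faux n (2*(n-1)+1) := by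
      rw [show n = (n-1)+1 by omega]
      rw [prod_range_succ]
      congr 2 <;> omega
    rw [h1]
    have h2 : ∀ t : ℕ, Faux n (2*t+1+1) = Faux n (2*t+2) := by intro t; congr 1
    rw [Finset.prod_congr rfl (fun t _ => h2 t)]
    ring
  rw [Paux_top hn, Paux_even_prod hn] at hsplit
  have hne : ((n:ℝ))^2 ≠ 0 := by
    have : (0:ℝ) < n := by exact_mod_cast hn
    positivity
  apply mul_right_cancel₀ hne
  rw [← hsplit]
  ring

lemma Paux_half (hn : 1 ≤ n) : Paux n (n-1) = n := by
  have hcut := Paux_cut hn (m := n-1) (by omega)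
  rw [show 2*n-1-(n-1) = n by omega] at hcut
  have hPn : Paux n n = Paux n (n-1) * Faux n n := by
    unfold Paux
    rw [show n = (n-1)+1 by omega, prod_range_succ]
    congr 2 <;> omega
  rw [Paux_top hn, hPn, Faux_self hn] at hcut
  have hpos : 0 < Paux n (n-1) := Paux_pos (fun r hr => by omega)
  have hnpos : (0:ℝ) < n := by exact_mod_cast hn
  have hfac : (Paux n (n-1) - n) * (Paux n (n-1) + n) = 0 := by nlinarith [hcut]
  rcases mul_eq_zero.mp hfac with h | h
  · linarith
  · linarith

lemma Q_val (hn : 1 ≤ n) :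
    ∏ j ∈ range n, Paux n (2*j+1) = 2 * (2*(n:ℝ))^n := by
  set Q := ∏ j ∈ range n, Paux n (2*j+1) with hQ
  have hpair : ∀ j < n, Paux n (2*j+1) * Paux n (2*(n-1-j)+1)
      = (2*(n:ℝ))^2 * Faux n (2*j+1) := by
    intro j hj
    have hcut := Paux_cut hn (m := 2*j+1) (by omega)
    rw [show 2*n-1-(2*j+1) = 2*n-2*j-2 by omega, Paux_top hn] at hcut
    have hsplit : Paux n (2*(n-1-j)+1) = Paux n (2*n-2*j-2) * Faux n (2*j+1) := by
      unfold Paux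
      rw [show 2*(n-1-j)+1 = (2*n-2*j-2)+1 by omega, prod_range_succ]
      congr 1
      rw [show 2*n-2*j-2+1 = 2*n - (2*j+1) by omega]
      exact Faux_symm hn (by omega)
    rw [hsplit, ← mul_assoc, ← hcut]
  have hQ2 : Q * Q = ((2*(n:ℝ))^2)^n * 4 := by
    have hrefl : Q = ∏ j ∈ range n, Paux n (2*(n-1-j)+1) :=
      (Finset.prod_range_reflect (fun j => Paux n (2*j+1)) n).symm
    calc Q * Q = ∏ j ∈ range n, (Paux n (2*j+1) * Paux n (2*(n-1-j)+1)) := by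
          rw [Finset.prod_mul_distrib, ← hQ, ← hrefl]
      _ = ∏ j ∈ range n, ((2*(n:ℝ))^2 * Faux n (2*j+1)) :=
          Finset.prod_congr rfl (fun j hj => hpair j (mem_range.mp hj))
      _ = ((2*(n:ℝ))^2)^n * 4 := by
          rw [Finset.prod_mul_distrib, Finset.prod_const, card_range, Paux_odd_prod hn]
  have hQpos : 0 < Q := by
    apply Finset.prod_pos
    intro j hj
    have hjn := mem_range.mp hj
    exact Paux_pos (fun r hr => by omega)
  have hcpos : (0:ℝ) < 2 * (2*(n:ℝ))^n := by
    have : (0:ℝ) < n := by exact_mod_cast hn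
    positivity
  have hc2 : (2 * (2*(n:ℝ))^n) * (2 * (2*(n:ℝ))^n) = ((2*(n:ℝ))^2)^n * 4 := by
    rw [← pow_mul]
    ring
  have hfac : (Q - 2 * (2*(n:ℝ))^n) * (Q + 2 * (2*(n:ℝ))^n) = 0 := by
    nlinarith [hQ2, hc2]
  rcases mul_eq_zero.mp hfac with h | h
  · linarith
  · linarith

end derived

/-- For every `n ≥ 1`: `∏_{0 ≤ i < j ≤ n} f_{2n}(j-i) f_{2n}(i+j) = 4 (2n)^{n+1}`. -/
theorem prod_pairs_numerator (n : ℕ) (hn : 1 ≤ n) :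
    ∏ j ∈ Finset.range (n + 1), ∏ i ∈ Finset.range j,
        f (2 * n) ((j : ℝ) - (i : ℝ)) * f (2 * n) ((i : ℝ) + (j : ℝ))
      = 4 * (2 * n : ℝ) ^ (n + 1) := by
  open Finset in
  have hstep : ∀ j i : ℕ, i < j →
      f (2*n) ((j:ℝ) - (i:ℝ)) * f (2*n) ((i:ℝ) + (j:ℝ)) = Faux n (j-i) * Faux n (i+j) := by
    intro j i hij
    unfold f Faux
    have h1 : ((j - i : ℕ) : ℝ) = (j:ℝ) - i := by
      push_cast [Nat.cast_sub hij.le]; ring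
    have h2 : ((i + j : ℕ) : ℝ) = (i:ℝ) + j := by push_cast; ring
    have h3 : ((2*n : ℕ) : ℝ) = 2*(n:ℝ) := by push_cast; ring
    rw [h1, h2, h3]
  have hLHS : ∏ j ∈ range (n + 1), ∏ i ∈ range j,
        f (2*n) ((j:ℝ) - (i:ℝ)) * f (2*n) ((i:ℝ) + (j:ℝ))
      = ∏ j ∈ range (n + 1), ∏ i ∈ range j, Faux n (j-i) * Faux n (i+j) := by
    apply Finset.prod_congr rfl
    intro j _
    exact Finset.prod_congr rfl (fun i hi => hstep j i (mem_range.mp hi))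
  rw [hLHS]
  have hinner : ∀ j : ℕ, ∏ i ∈ range (j+1), Faux n ((j+1)-i) * Faux n (i+(j+1))
      = Faux n (j+1) * Paux n (2*j+1) := by
    intro j
    rw [Finset.prod_mul_distrib]
    have hA : ∏ i ∈ range (j+1), Faux n ((j+1)-i) = Paux n (j+1) := by
      unfold Paux
      rw [← Finset.prod_range_reflect (fun i => Faux n (i+1)) (j+1)]
      apply Finset.prod_congr rfl
      intro i hi
      have : i < j+1 := mem_range.mp hi
      show Faux n ((j+1)-i) = Faux n ((j+1)-1-i+1)
      congr 1
      omega
    have hB : ∏ i ∈ range (j+1), Faux n (i+(j+1))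
        = ∏ r ∈ Ico j (2*j+1), Faux n (r+1) := by
      rw [Finset.prod_Ico_eq_prod_range]
      rw [show 2*j+1-j = j+1 by omega]
      apply Finset.prod_congr rfl
      intro i _
      congr 1
      omega
    have hC : Paux n j * ∏ r ∈ Ico j (2*j+1), Faux n (r+1) = Paux n (2*j+1) := by
      unfold Paux
      exact Finset.prod_range_mul_prod_Ico (fun r => Faux n (r+1)) (by omega)
    have hPj : Paux n (j+1) = Paux n j * Faux n (j+1) := by
      unfold Paux
      rw [prod_range_succ]
    rw [hA, hB, hPj]
    rw [← hC]
    ring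
  rw [Finset.prod_range_succ']
  simp only [range_zero, prod_empty, mul_one]
  rw [Finset.prod_congr rfl (fun j (_ : j ∈ range n) => hinner j), Finset.prod_mul_distrib]
  have hQ := Q_val hn
  have hP : ∏ j ∈ range n, Faux n (j+1) = Paux n n := rfl
  rw [hQ, hP]
  have hPn : Paux n n = Paux n (n-1) * Faux n n := by
    unfold Paux
    rw [show n = (n-1)+1 by omega, prod_range_succ]
    congr 2 <;> omega
  rw [hPn, Paux_half hn, Faux_self hn]
  rw [pow_succ]
  push_cast
  ring
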